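/- Let U be a finite type, n : ℕ, and let μ be a pmf on the type of sequences Fin n → U. Let D ⊆ Fin n be a set of indices and, for each i ∈ D, let f_i be a function assigning to each length-i prefix (an element of Fin i → U) a symbol in U. For each sequence u define the decoded sequence û(u) recursively by: û(u)_i = u_i if i ∉ D, and û(u)_i = f_i applied to the prefix (û(u)_0, …, û(u)_{i−1}) if i ∈ D. Then the probability of a decoding error satisfies μ{u : û(u) ≠ u} ≤ ∑_{i ∈ D} μ{u : f_i(u_0, …, u_{i−1}) ≠ u_i}. -/

import Mathlib

/-- The successively decoded sequence: coordinates outside `D` are copied from `u`,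
coordinates in `D` are computed by the decision functions `f` from the previously
decoded prefix. -/
def decode {U : Type*} {n : ℕ} (D : Finset (Fin n))
    (f : (i : Fin n) → (Fin i.val → U) → U) (u : Fin n → U) : Fin n → U
  | i =>
    if i ∈ D then
      f i (fun j : Fin i.val => decode D f u (Fin.castLT j (j.isLt.trans i.isLt)))
    else u i
  termination_by i => i.val

lemma sum_biUnion_le_aux {α ι : Type*} [DecidableEq α] (μ : α → ℝ) (hμ0 : ∀ u, 0 ≤ μ u)
    (s : Finset ι) (t : ι → Finset α) :
    ∑ u ∈ s.biUnion t, μ u ≤ ∑ i ∈ s, ∑ u ∈ t i, μ u := by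
  classical
  induction s using Finset.induction_on with
  | empty => simp
  | insert a s ha ih =>
    rw [Finset.biUnion_insert, Finset.sum_insert ha]
    have h1 : ∑ u ∈ t a ∪ s.biUnion t, μ u ≤
        ∑ u ∈ t a, μ u + ∑ u ∈ s.biUnion t, μ u := by
      have := Finset.sum_union_inter (s₁ := t a) (s₂ := s.biUnion t) (f := μ)
      have hnn : (0:ℝ) ≤ ∑ u ∈ t a ∩ s.biUnion t, μ u :=
        Finset.sum_nonneg fun u _ => hμ0 u
      linarith
    exact h1.trans (by linarith)

theorem stmt_2 {U : Type*} [Fintype U] [DecidableEq U] {n : ℕ} (μ : (Fin n → U) → ℝ)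
    (hμ0 : ∀ u, 0 ≤ μ u) (hμ1 : ∑ u, μ u = 1)
    (D : Finset (Fin n)) (f : (i : Fin n) → (Fin i.val → U) → U) :
    ∑ u ∈ Finset.univ.filter (fun u : Fin n → U => decode D f u ≠ u), μ u ≤
      ∑ i ∈ D, ∑ u ∈ Finset.univ.filter
        (fun u : Fin n → U =>
          f i (fun j : Fin i.val => u (Fin.castLT j (j.isLt.trans i.isLt))) ≠ u i), μ u := by
  classical
  have key : ∀ u : Fin n → U, decode D f u ≠ u →
      ∃ i ∈ D, f i (fun j : Fin i.val => u (Fin.castLT j (j.isLt.trans i.isLt))) ≠ u i := by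
    intro u hu
    have hS : (Finset.univ.filter (fun i => decode D f u i ≠ u i)).Nonempty := by
      by_contra h
      apply hu
      funext i
      by_contra hi
      exact h ⟨i, Finset.mem_filter.mpr ⟨Finset.mem_univ i, hi⟩⟩
    set S := Finset.univ.filter (fun i => decode D f u i ≠ u i) with hSdef
    set i := S.min' hS with hidef
    have hi : decode D f u i ≠ u i := (Finset.mem_filter.mp (S.min'_mem hS)).2
    have hprev : ∀ j : Fin n, j < i → decode D f u j = u j := by
      intro j hj
      by_contra hjne
      exact absurd hj (not_lt.mpr (S.min'_le j
        (Finset.mem_filter.mpr ⟨Finset.mem_univ _, hjne⟩)))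
    by_cases hiD : i ∈ D
    · refine ⟨i, hiD, ?_⟩
      have heq : decode D f u i =
          f i (fun j : Fin i.val => decode D f u (Fin.castLT j (j.isLt.trans i.isLt))) := by
        rw [decode]; simp [hiD]
      have hpre : (fun j : Fin i.val => decode D f u (Fin.castLT j (j.isLt.trans i.isLt))) =
          fun j : Fin i.val => u (Fin.castLT j (j.isLt.trans i.isLt)) := by
        funext j
        exact hprev _ (by simpa [Fin.lt_def] using j.isLt)
      rw [heq, hpre] at hi
      exact hi
    · exfalso
      apply hi
      rw [decode]
      simp [hiD]
  have hsub : Finset.univ.filter (fun u : Fin n → U => decode D f u ≠ u) ⊆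
      D.biUnion (fun i => Finset.univ.filter
        (fun u : Fin n → U =>
          f i (fun j : Fin i.val => u (Fin.castLT j (j.isLt.trans i.isLt))) ≠ u i)) := by
    intro u hu
    obtain ⟨i, hiD, hif⟩ := key u (Finset.mem_filter.mp hu).2
    exact Finset.mem_biUnion.mpr ⟨i, hiD, Finset.mem_filter.mpr ⟨Finset.mem_univ _, hif⟩⟩
  calc ∑ u ∈ Finset.univ.filter (fun u : Fin n → U => decode D f u ≠ u), μ u
      ≤ ∑ u ∈ D.biUnion (fun i => Finset.univ.filter
        (fun u : Fin n → U =>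
          f i (fun j : Fin i.val => u (Fin.castLT j (j.isLt.trans i.isLt))) ≠ u i)), μ u :=
        Finset.sum_le_sum_of_subset_of_nonneg hsub (fun u _ _ => hμ0 u)
    _ ≤ _ := sum_biUnion_le_aux μ hμ0 D _
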